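/- Let P: ℝ → ℝ be a bounded measurable function with P(x) = 0 for x ≤ c and P(x) = 1 for x ≥ d, for some c ≤ d. Then for every z ∈ ℝ, the function x ↦ P(x+z) − P(x) is integrable and ∫_ℝ (P(x+z) − P(x)) dx = z. -/
import Mathlib


noncomputable section

open MeasureTheory

/-- for a bounded measurable switch function `P` (equal to `0` for `x ≤ c`
and to `1` for `x ≥ d`), the function `x ↦ P(x+z) − P(x)` is integrable with
`∫ (P(x+z) − P(x)) dx = z`. -/
theorem integral_of_shifted_switch (P : ℝ → ℝ) (c d : ℝ) (hcd : c ≤ d)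
    (hmeas : Measurable P) (hbdd : ∃ C : ℝ, ∀ x : ℝ, |P x| ≤ C)
    (h0 : ∀ x : ℝ, x ≤ c → P x = 0) (h1 : ∀ x : ℝ, d ≤ x → P x = 1) :
    ∀ z : ℝ,
      Integrable (fun x : ℝ => P (x + z) - P x) volume ∧
      (∫ x : ℝ, (P (x + z) - P x)) = z := by
  obtain ⟨C, hC⟩ := hbdd
  intro z
  set A := min c (c - z) with hA
  set B := max d (d - z) with hB
  have hAc : A ≤ c := min_le_left _ _
  have hAz : A + z ≤ c := by
    have : A ≤ c - z := min_le_right _ _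
    linarith
  have hdB : d ≤ B := le_max_left _ _
  have hdBz : d ≤ B + z := by
    have : d - z ≤ B := le_max_right _ _
    linarith
  have hAB : A ≤ B := le_trans (hAc.trans hcd) hdB
  set f : ℝ → ℝ := fun x => P (x + z) - P x with hf
  have hsupp : Function.support f ⊆ Set.Icc A B := by
    intro x hx
    by_contra h
    apply hx
    simp only [Set.mem_Icc, not_and_or, not_le] at h
    rcases h with h | h
    · have h1' : x ≤ c := le_of_lt (h.trans_le hAc)
      have h2' : x + z ≤ c := by linarith
      simp [hf, h0 _ h1', h0 _ h2']
    · have h1' : d ≤ x := le_of_lt (lt_of_le_of_lt hdB h)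
      have h2' : d ≤ x + z := by linarith
      simp [hf, h1 _ h1', h1 _ h2']
  have hfmeas : Measurable f := (hmeas.comp (measurable_id.add_const z)).sub hmeas
  have hint : IntegrableOn f (Set.Icc A B) volume := by
    apply Measure.integrableOn_of_bounded (M := 2 * |C|)
    · exact measure_Icc_lt_top.ne
    · exact hfmeas.aestronglyMeasurable
    · filter_upwards with x
      have h1' := abs_le.mp (hC (x + z))
      have h2' := abs_le.mp (hC x)
      have h3' : C ≤ |C| := le_abs_self C
      have h4' : -|C| ≤ C := neg_abs_le C
      rw [Real.norm_eq_abs, abs_le]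
      constructor <;> simp only [hf] <;> nlinarith
  have hintf : Integrable f volume :=
    (integrableOn_iff_integrable_of_support_subset hsupp).mp hint
  refine ⟨hintf, ?_⟩
  have hPint : ∀ a b : ℝ, IntervalIntegrable P volume a b := by
    intro a b
    rw [intervalIntegrable_iff]
    apply Measure.integrableOn_of_bounded (M := |C|)
    · exact measure_Ioc_lt_top.ne
    · exact hmeas.aestronglyMeasurable
    · filter_upwards with x
      exact (hC x).trans (le_abs_self C)
  have hPzint : ∀ a b : ℝ, IntervalIntegrable (fun x => P (x + z)) volume a b := by
    intro a b
    have := (hPint (a + z) (b + z)).comp_add_right z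
    simpa using this
  have hset : (∫ x, f x) = ∫ x in Set.Icc A B, f x := by
    rw [setIntegral_eq_integral_of_forall_compl_eq_zero]
    intro x hx
    by_contra h
    exact hx (hsupp h)
  have hicc : (∫ x in Set.Icc A B, f x) = ∫ x in A..B, f x := by
    rw [intervalIntegral.integral_of_le hAB, integral_Icc_eq_integral_Ioc]
  have hsplit : (∫ x in A..B, f x)
      = (∫ x in A..B, P (x + z)) - ∫ x in A..B, P x := by
    simp only [hf]
    exact intervalIntegral.integral_sub (hPzint A B) (hPint A B)
  have hshift : (∫ x in A..B, P (x + z)) = ∫ x in (A + z)..(B + z), P x :=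
    intervalIntegral.integral_comp_add_right P z
  have hadd1 : (∫ x in (A + z)..A, P x) + (∫ x in A..B, P x)
      = ∫ x in (A + z)..B, P x :=
    intervalIntegral.integral_add_adjacent_intervals (hPint _ _) (hPint _ _)
  have hadd2 : (∫ x in (A + z)..B, P x) + (∫ x in B..(B + z), P x)
      = ∫ x in (A + z)..(B + z), P x :=
    intervalIntegral.integral_add_adjacent_intervals (hPint _ _) (hPint _ _)
  have hzero : (∫ x in (A + z)..A, P x) = 0 := by
    have : (∫ x in (A + z)..A, P x) = ∫ x in (A + z)..A, (0 : ℝ) := by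
      apply intervalIntegral.integral_congr
      intro x hx
      have hx' : x ≤ c := by
        rcases Set.mem_uIcc.mp hx with ⟨_, h2⟩ | ⟨_, h2⟩
        · exact h2.trans hAc
        · exact h2.trans hAz
      exact h0 x hx'
    simp [this]
  have hone : (∫ x in B..(B + z), P x) = z := by
    have : (∫ x in B..(B + z), P x) = ∫ x in B..(B + z), (1 : ℝ) := by
      apply intervalIntegral.integral_congr
      intro x hx
      have hx' : d ≤ x := by
        rcases Set.mem_uIcc.mp hx with ⟨h2, _⟩ | ⟨h2, _⟩
        · exact hdB.trans h2
        · exact hdBz.trans h2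
      exact h1 x hx'
    rw [this]
    simp
  calc (∫ x, f x) = ∫ x in A..B, f x := by rw [hset, hicc]
    _ = (∫ x in A..B, P (x + z)) - ∫ x in A..B, P x := hsplit
    _ = (∫ x in (A + z)..(B + z), P x) - ∫ x in A..B, P x := by rw [hshift]
    _ = z := by
        rw [← hadd2, ← hadd1, hzero, hone]
        ring
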